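/- arXiv:1907.04458 — 2 statements merged into one kernel-verified Lean document; each statement's English description precedes it below -/
import Mathlib

section
/- Let (a_n) be a sequence of reals with a_n ≥ 1 for all n, and let k be a positive natural number. Then liminf_{n→∞} a_{n+k}/a_n ≤ (limsup_{n→∞} a_n^{1/n})^k, provided limsup_{n→∞} a_n^{1/n} is finite. -/
open Filter Topology

theorem stmt_1 (a : ℕ → ℝ) (ha : ∀ n, 1 ≤ a n) (k : ℕ) (hk : 0 < k)
    (hfin : IsBoundedUnder (· ≤ ·) atTop (fun n => a n ^ (1 / (n : ℝ)))) :
    liminf (fun n => a (n + k) / a n) atTop ≤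
      (limsup (fun n => a n ^ (1 / (n : ℝ))) atTop) ^ k := by
  by_contra hcon
  push_neg at hcon
  set L := limsup (fun n => a n ^ (1 / (n : ℝ))) atTop with hLdef
  set I := liminf (fun n => a (n + k) / a n) atTop with hIdef
  have hpos : ∀ n, 0 < a n := fun n => lt_of_lt_of_le one_pos (ha n)
  have hL1 : (1:ℝ) ≤ L := by
    apply le_limsup_of_frequently_le _ hfin
    apply Frequently.of_forall
    intro n
    exact Real.one_le_rpow (ha n) (by positivity)
  have hLk1 : (1:ℝ) ≤ L ^ k := one_le_pow₀ hL1
  set c := (L ^ k + I) / 2 with hcdef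
  have hc1 : L ^ k < c := by rw [hcdef]; linarith
  have hc2 : c < I := by rw [hcdef]; linarith
  have hcgt1 : (1:ℝ) < c := lt_of_le_of_lt hLk1 hc1
  have hcpos : (0:ℝ) < c := lt_trans one_pos hcgt1
  have hev : ∀ᶠ n in atTop, c < a (n + k) / a n :=
    eventually_lt_of_lt_liminf hc2
      (isBoundedUnder_of ⟨0, fun n => (div_pos (hpos _) (hpos _)).le⟩)
  obtain ⟨N, hN⟩ := eventually_atTop.1 hev
  have key : ∀ m, c ^ m ≤ a (N + m * k) := by
    intro m
    induction m with
    | zero => simpa using ha N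
    | succ m ih =>
      have h1 : c < a (N + m * k + k) / a (N + m * k) := hN (N + m * k) (Nat.le_add_right _ _)
      rw [lt_div_iff₀ (hpos _)] at h1
      have hidx : N + (m + 1) * k = N + m * k + k := by ring
      rw [hidx]
      calc c ^ (m + 1) = c * c ^ m := by ring
      _ ≤ c * a (N + m * k) := mul_le_mul_of_nonneg_left ih hcpos.le
      _ ≤ a (N + m * k + k) := h1.le
  -- tendsto of exponents
  have hT : Tendsto (fun m : ℕ => (m : ℝ) / (N + m * k)) atTop (𝓝 (1 / k)) := by
    have h0 : Tendsto (fun m : ℕ => (N : ℝ) / m) atTop (𝓝 0) :=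
      Tendsto.div_atTop (tendsto_const_nhds : Tendsto (fun _ : ℕ => (N : ℝ)) atTop (𝓝 (N : ℝ)))
        tendsto_natCast_atTop_atTop
    have h1 : Tendsto (fun m : ℕ => (N : ℝ) / m + k) atTop (𝓝 (k : ℝ)) := by
      simpa using h0.add (tendsto_const_nhds : Tendsto (fun _ : ℕ => (k : ℝ)) atTop (𝓝 (k : ℝ)))
    have h2 := h1.inv₀ (by positivity : ((k:ℝ) ≠ 0))
    rw [one_div]
    apply h2.congr'
    filter_upwards [eventually_ge_atTop 1] with m hm
    have hm0 : (0:ℝ) < m := by exact_mod_cast hm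
    have hd : (0:ℝ) < (N : ℝ) + m * k := by positivity
    field_simp
  have hTc : Tendsto (fun m : ℕ => c ^ ((m : ℝ) / (N + m * k))) atTop
      (𝓝 (c ^ ((1:ℝ) / k))) :=
    Tendsto.rpow tendsto_const_nhds hT (Or.inl hcpos.ne')
  have hle : c ^ ((1:ℝ) / k) ≤ L := by
    apply le_of_forall_lt_imp_le_of_dense
    intro x hx
    apply le_limsup_of_frequently_le _ hfin
    rw [frequently_atTop]
    intro M
    have hev2 : ∀ᶠ m : ℕ in atTop, x < c ^ ((m : ℝ) / (N + m * k)) :=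
      hTc.eventually (eventually_gt_nhds hx)
    obtain ⟨m, hm1, hm2⟩ := ((eventually_ge_atTop (max M 1)).and hev2).exists
    have hmM : M ≤ m := le_trans (le_max_left _ _) hm1
    have hm1' : 1 ≤ m := le_trans (le_max_right _ _) hm1
    refine ⟨N + m * k, ?_, ?_⟩
    · calc M ≤ m := hmM
      _ ≤ m * k := Nat.le_mul_of_pos_right m hk
      _ ≤ N + m * k := Nat.le_add_left _ _
    · have hnpos : (0:ℝ) < ((N + m * k : ℕ) : ℝ) := by
        have : 0 < N + m * k := by positivity
        exact_mod_cast this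
      calc x ≤ c ^ ((m : ℝ) / (N + m * k)) := hm2.le
      _ = (c ^ m) ^ (1 / ((N + m * k : ℕ) : ℝ)) := by
          rw [← Real.rpow_natCast c m, ← Real.rpow_mul hcpos.le]
          push_cast
          ring_nf
      _ ≤ a (N + m * k) ^ (1 / ((N + m * k : ℕ) : ℝ)) :=
          Real.rpow_le_rpow (by positivity) (key m) (by positivity)
  have hfinal : c ≤ L ^ k := by
    have h3 : (c ^ ((1:ℝ) / k)) ^ k ≤ L ^ k :=
      pow_le_pow_left₀ (Real.rpow_nonneg hcpos.le _) hle k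
    have h4 : (c ^ ((1:ℝ) / k)) ^ k = c := by
      rw [← Real.rpow_natCast (c ^ ((1:ℝ)/k)) k, ← Real.rpow_mul hcpos.le]
      rw [one_div, inv_mul_cancel₀ (by positivity : ((k:ℝ) ≠ 0)), Real.rpow_one]
    linarith [h3, h4.symm.le]
  linarith
end

section
/- Let k be a positive natural, (P_n) positive reals, and (S_n) nonnegative reals with S_n ≤ P_n, satisfying S_{n+k} ≥ P_n − S_n for all n, and suppose P_{n+k}/P_n ≤ C for all n with C ≥ 1. Then limsup_{n→∞} S_n/P_n ≥ 1/(1+C). -/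
open Filter

theorem stmt_19 (k : ℕ) (hk : 0 < k) (P S : ℕ → ℝ)
    (hP : ∀ n, 0 < P n) (hS : ∀ n, 0 ≤ S n) (hSP : ∀ n, S n ≤ P n)
    (hrec : ∀ n, S (n + k) ≥ P n - S n)
    (C : ℝ) (hC : 1 ≤ C) (hratio : ∀ n, P (n + k) / P n ≤ C) :
    limsup (fun n => S n / P n) atTop ≥ 1 / (1 + C) := by
  by_contra h
  push_neg at h
  have hC0 : (0:ℝ) < 1 + C := by linarith
  have hbd : IsBoundedUnder (· ≤ ·) atTop (fun n => S n / P n) :=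
    isBoundedUnder_of ⟨1, fun n => by
      rw [div_le_one (hP n)]; exact hSP n⟩
  have hev := eventually_lt_of_limsup_lt h hbd
  obtain ⟨N, hN⟩ := eventually_atTop.mp hev
  have ha : (1 / (1 + C)) * (1 + C) = 1 := by field_simp
  have h1 : S (N + k) / P (N + k) < 1 / (1 + C) := hN _ (Nat.le_add_right N k)
  have hPr : P (N + k) ≤ C * P N := by
    have := hratio N
    rwa [div_le_iff₀ (hP N)] at this
  have hSN : S N < (1 / (1 + C)) * P N := by
    have := hN N le_rfl
    rwa [div_lt_iff₀ (hP N)] at this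
  have hrecN := hrec N
  rw [div_lt_iff₀ (hP (N + k))] at h1
  have ha0 : (0:ℝ) < 1 / (1 + C) := by positivity
  nlinarith [hP (N + k), hP N]
end
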